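/- For every K₅-free graph G on n vertices, α₁(G) + τ_B(G) ≤ 3n²/10. -/

import Mathlib

open SimpleGraph Finset

variable {V : Type*} [Fintype V] [DecidableEq V]

/-- `A` is a triangle-independent edge set of `G`: a set of edges of `G`
containing at most one edge from each triangle of `G`. -/
def IsTriangleIndep (G : SimpleGraph V) (A : Finset (Sym2 V)) : Prop :=
  (A : Set (Sym2 V)) ⊆ G.edgeSet ∧
    ∀ a b c : V, G.Adj a b → G.Adj b c → G.Adj a c →
      ({s(a, b), s(b, c), s(a, c)} ∩ A).card ≤ 1

/-- `α₁(G)`: the maximum size of a triangle-independent set in `G`. -/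
noncomputable def alphaOne (G : SimpleGraph V) : ℕ :=
  sSup {k | ∃ A : Finset (Sym2 V), IsTriangleIndep G A ∧ A.card = k}

/-- `τ_B(G)`: the minimum size of an edge set of `G` whose deletion makes `G` bipartite. -/
noncomputable def tauB (G : SimpleGraph V) : ℕ :=
  sInf {k | ∃ D : Finset (Sym2 V), (D : Set (Sym2 V)) ⊆ G.edgeSet ∧
    (G.deleteEdges (D : Set (Sym2 V))).Colorable 2 ∧ D.card = k}

/-- `b(G)`: the maximum size of a vertex set inducing a bipartite subgraph of `G`. -/
noncomputable def bipNum (G : SimpleGraph V) : ℕ :=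
  sSup {k | ∃ B : Finset V, (G.induce (B : Set V)).Colorable 2 ∧ B.card = k}


set_option linter.unusedSectionVars false
set_option maxHeartbeats 1000000

def apairs (H : SimpleGraph V) [DecidableRel H.Adj] (s t : Finset V) : ℕ :=
  #((s ×ˢ t).filter fun p : V × V => H.Adj p.1 p.2)

lemma apairs_comm (H : SimpleGraph V) [DecidableRel H.Adj] (s t : Finset V) :
    apairs H s t = apairs H t s := by
  apply Finset.card_bij (fun p _ => Prod.swap p)
  · intro p hp
    simp only [mem_filter, mem_product] at hp ⊢
    exact ⟨⟨hp.1.2, hp.1.1⟩, hp.2.symm⟩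
  · intro p _ q _ h
    exact Prod.swap_injective h
  · intro p hp
    refine ⟨Prod.swap p, ?_, by simp⟩
    simp only [mem_filter, mem_product] at hp ⊢
    exact ⟨⟨hp.1.2, hp.1.1⟩, hp.2.symm⟩

lemma filter_singleton_product (H : SimpleGraph V) [DecidableRel H.Adj] (v : V) (t : Finset V) :
    #(({v} ×ˢ t).filter fun p : V × V => H.Adj p.1 p.2) = #(t.filter (H.Adj v)) := by
  rw [Finset.singleton_product, Finset.filter_map]
  rw [Finset.card_map]
  rfl

lemma apairs_insert_left (H : SimpleGraph V) [DecidableRel H.Adj] {v : V} {s : Finset V}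
    (hv : v ∉ s) (t : Finset V) :
    apairs H (insert v s) t = apairs H s t + #(t.filter (H.Adj v)) := by
  unfold apairs
  rw [show insert v s = {v} ∪ s from rfl, Finset.union_product, filter_union,
    card_union_of_disjoint, filter_singleton_product]
  · omega
  · apply Finset.disjoint_filter_filter
    rw [Finset.disjoint_left]
    rintro ⟨a, b⟩ h1 h2
    rw [mem_product] at h1 h2
    simp only [mem_singleton] at h1
    exact hv (h1.1 ▸ h2.1)

lemma apairs_insert_right (H : SimpleGraph V) [DecidableRel H.Adj] {v : V} {t : Finset V}
    (hv : v ∉ t) (s : Finset V) :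
    apairs H s (insert v t) = apairs H s t + #(s.filter (H.Adj v)) := by
  rw [apairs_comm H s (insert v t), apairs_insert_left H hv, apairs_comm H t s]

lemma apairs_insert_insert (H : SimpleGraph V) [DecidableRel H.Adj] {v : V} {s : Finset V}
    (hv : v ∉ s) :
    apairs H (insert v s) (insert v s) = apairs H s s + 2 * #(s.filter (H.Adj v)) := by
  rw [apairs_insert_left H hv, apairs_insert_right H hv]
  have : (insert v s).filter (H.Adj v) = s.filter (H.Adj v) := by
    rw [filter_insert, if_neg (by simp)]
  rw [this]; omega

lemma filter_union_card {p : V → Prop} [DecidablePred p] {A B : Finset V}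
    (h : Disjoint A B) : #((A ∪ B).filter p) = #(A.filter p) + #(B.filter p) := by
  rw [filter_union, card_union_of_disjoint (Finset.disjoint_filter_filter h)]

/-- graph of monochromatic edges -/
def monoGraph (G : SimpleGraph V) (σ : V → Bool) : SimpleGraph V where
  Adj x y := G.Adj x y ∧ σ x = σ y
  symm := ⟨by intro x y ⟨h1, h2⟩; exact ⟨h1.symm, h2.symm⟩⟩
  loopless := ⟨by intro x ⟨h1, _⟩; exact G.ne_of_adj h1 rfl⟩

instance (G : SimpleGraph V) [DecidableRel G.Adj] (σ : V → Bool) :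
    DecidableRel (monoGraph G σ).Adj := fun _ _ => instDecidableAnd

lemma greedy (G : SimpleGraph V) [DecidableRel G.Adj] (B : Finset V)
    (hB : (G.induce (B : Set V)).Colorable 2) :
    ∀ T : Finset V, Disjoint B T → ∃ σ : V → Bool,
      2 * apairs (monoGraph G σ) (B ∪ T) (B ∪ T) ≤ 2 * apairs G B T + apairs G T T := by
  intro T
  induction T using Finset.induction_on with
  | empty =>
    intro _
    obtain ⟨C⟩ := hB
    set σ0 : V → Bool := fun x => if h : x ∈ B then decide (C ⟨x, h⟩ = 0) else false with hσ0
    refine ⟨σ0, ?_⟩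
    have : apairs (monoGraph G σ0) (B ∪ ∅) (B ∪ ∅) = 0 := by
      rw [union_empty, apairs, card_eq_zero, filter_eq_empty_iff]
      rintro ⟨x, y⟩ hxy ⟨hadj, hmono⟩
      rw [mem_product] at hxy
      simp only [hσ0, dif_pos hxy.1, dif_pos hxy.2] at hmono
      have hne := C.valid (show (G.induce (B : Set V)).Adj ⟨x, hxy.1⟩ ⟨y, hxy.2⟩ from hadj)
      generalize C ⟨x, hxy.1⟩ = a at hmono hne
      generalize C ⟨y, hxy.2⟩ = b at hmono hne
      fin_cases a <;> fin_cases b <;> simp_all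
    omega
  | @insert v T' hvT ih =>
    intro hdisj
    have hdisj' : Disjoint B T' := hdisj.mono_right (by simp)
    have hvB : v ∉ B := by
      intro h
      exact (Finset.disjoint_left.mp hdisj h) (mem_insert_self v T')
    obtain ⟨σ, hσ⟩ := ih hdisj'
    set S := B ∪ T' with hS
    have hvS : v ∉ S := by simp [hS, hvB, hvT]
    set t := #(S.filter fun x => G.Adj v x ∧ σ x = true) with ht
    set f := #(S.filter fun x => G.Adj v x ∧ σ x = false) with hf
    set c : Bool := decide (t ≤ f) with hc
    set σ' : V → Bool := Function.update σ v c with hσ'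
    refine ⟨σ', ?_⟩
    have hunion : B ∪ insert v T' = insert v S := by
      rw [hS]; ext x; simp only [Finset.mem_insert, Finset.mem_union]; tauto
    -- mono on S unchanged
    have hmS : apairs (monoGraph G σ') S S = apairs (monoGraph G σ) S S := by
      unfold apairs
      congr 1
      apply filter_congr
      rintro ⟨x, y⟩ hxy
      rw [mem_product] at hxy
      have hx : σ' x = σ x := Function.update_of_ne (fun h => hvS (by rw [← h]; exact hxy.1)) _ _
      have hy : σ' y = σ y := Function.update_of_ne (fun h => hvS (by rw [← h]; exact hxy.2)) _ _
      simp only [monoGraph, hx, hy]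
    have hgrow : apairs (monoGraph G σ') (insert v S) (insert v S)
        = apairs (monoGraph G σ') S S + 2 * #(S.filter ((monoGraph G σ').Adj v)) :=
      apairs_insert_insert _ hvS
    -- the new monochromatic count
    have hg : 2 * #(S.filter ((monoGraph G σ').Adj v)) ≤ t + f := by
      have hgeq : #(S.filter ((monoGraph G σ').Adj v))
          = #(S.filter fun x => G.Adj v x ∧ σ x = c) := by
        congr 1
        apply filter_congr
        intro x hx
        have hxv : x ≠ v := fun h => hvS (by rw [← h]; exact hx)
        have hx' : σ' x = σ x := Function.update_of_ne hxv _ _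
        have hv' : σ' v = c := Function.update_self _ _ _
        simp only [monoGraph, hx', hv']
        constructor
        · rintro ⟨h1, h2⟩; exact ⟨h1, h2.symm⟩
        · rintro ⟨h1, h2⟩; exact ⟨h1, h2.symm⟩
      rw [hgeq]
      by_cases hcc : t ≤ f
      · have : c = true := by simp [hc, hcc]
        rw [this, ← ht]; omega
      · have : c = false := by simp [hc, hcc]
        rw [this, ← hf]; omega
    have htf : t + f = #(B.filter (G.Adj v)) + #(T'.filter (G.Adj v)) := by
      have h1 : t + f = #(S.filter (G.Adj v)) := by
        have := Finset.card_filter_add_card_filter_not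
          (s := S.filter (G.Adj v)) (p := fun x => σ x = true)
        rw [filter_filter, filter_filter] at this
        rw [ht, hf]
        have e2 : S.filter (fun x => G.Adj v x ∧ ¬ σ x = true)
            = S.filter (fun x => G.Adj v x ∧ σ x = false) := by
          apply filter_congr; intro x _; simp
        rw [← e2]
        omega
      rw [h1, hS, filter_union_card hdisj']
    -- RHS increments
    have hrhs1 : apairs G B (insert v T') = apairs G B T' + #(B.filter (G.Adj v)) :=
      apairs_insert_right G hvT B
    have hrhs2 : apairs G (insert v T') (insert v T')
        = apairs G T' T' + 2 * #(T'.filter (G.Adj v)) :=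
      apairs_insert_insert G hvT
    rw [hunion, hgrow, hmS, hrhs1, hrhs2]
    omega


lemma apairs_le (H : SimpleGraph V) [DecidableRel H.Adj] (s t : Finset V) :
    apairs H s t ≤ #s * #t := by
  calc apairs H s t ≤ #(s ×ˢ t) := card_filter_le _ _
  _ = #s * #t := by rw [card_product]


lemma apairs_union_le (H : SimpleGraph V) [DecidableRel H.Adj] (A B s : Finset V) :
    apairs H (A ∪ B) s ≤ apairs H A s + apairs H B s := by
  unfold apairs
  rw [union_product, filter_union]
  exact card_union_le _ _

lemma apairs_split (H : SimpleGraph V) [DecidableRel H.Adj] (A B : Finset V) :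
    apairs H (A ∪ B) (A ∪ B) ≤
      apairs H A A + apairs H A B + apairs H B A + apairs H B B := by
  have h1 : apairs H (A ∪ B) (A ∪ B) ≤ apairs H A (A ∪ B) + apairs H B (A ∪ B) :=
    apairs_union_le ..
  have h2 : apairs H A (A ∪ B) ≤ apairs H A A + apairs H A B := by
    rw [apairs_comm H A (A ∪ B), apairs_comm H A A, apairs_comm H A B]
    exact apairs_union_le ..
  have h3 : apairs H B (A ∪ B) ≤ apairs H B A + apairs H B B := by
    rw [apairs_comm H B (A ∪ B), apairs_comm H B A, apairs_comm H B B]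
    exact apairs_union_le ..
  omega

lemma apairs_self_le_offDiag (H : SimpleGraph V) [DecidableRel H.Adj] (s : Finset V) :
    apairs H s s ≤ #s * #s - #s := by
  rw [← offDiag_card]
  apply card_le_card
  intro p hp
  simp only [mem_filter, mem_product, mem_offDiag] at hp ⊢
  exact ⟨hp.1.1, hp.1.2, hp.2.ne⟩


lemma nbrs_in_clique_le {H : SimpleGraph V} [DecidableRel H.Adj] {k : ℕ} {s : Finset V}
    (hf : H.CliqueFreeOn (s : Set V) (k+2)) {K : Finset V} (hK : H.IsNClique (k+1) K)
    (hKs : K ⊆ s) {v : V} (hv : v ∈ s) (hvK : v ∉ K) : #(K.filter (H.Adj v)) ≤ k := by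
  by_contra h
  push_neg at h
  have hcard : #K ≤ #(K.filter (H.Adj v)) := by rw [hK.card_eq]; omega
  have heq : K.filter (H.Adj v) = K := eq_of_subset_of_card_le (filter_subset _ _) hcard
  have hadj : ∀ u ∈ K, H.Adj v u := by
    intro u hu
    have hu' : u ∈ K.filter (H.Adj v) := by rw [heq]; exact hu
    exact (mem_filter.mp hu').2
  refine hf (t := insert v K) ?_ ?_
  · rw [coe_insert]
    exact Set.insert_subset hv (by exact_mod_cast hKs)
  · constructor
    · intro a ha b hb hab
      simp only [coe_insert, Set.mem_insert_iff, mem_coe] at ha hb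
      rcases ha with rfl | ha
      · rcases hb with rfl | hb
        · exact absurd rfl hab
        · exact hadj b hb
      · rcases hb with rfl | hb
        · exact (hadj a ha).symm
        · exact hK.isClique ha hb hab
    · rw [card_insert_of_notMem hvK, hK.card_eq]

lemma cross_pairs_le {H : SimpleGraph V} [DecidableRel H.Adj] {k : ℕ} {s : Finset V}
    (hf : H.CliqueFreeOn (s : Set V) (k+2)) {K : Finset V} (hK : H.IsNClique (k+1) K)
    (hKs : K ⊆ s) : apairs H (s \ K) K ≤ #(s \ K) * k := by
  unfold apairs
  rw [card_eq_sum_card_fiberwise (f := Prod.fst) (t := s \ K)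
    (by intro p hp; exact (mem_product.mp (mem_filter.mp hp).1).1)]
  calc ∑ v ∈ s \ K, #((((s \ K) ×ˢ K).filter fun p : V × V => H.Adj p.1 p.2).filter
        fun p => p.1 = v)
      ≤ ∑ _v ∈ s \ K, k := by
        apply sum_le_sum
        intro v hv
        rw [mem_sdiff] at hv
        have hsub : ((((s \ K) ×ˢ K).filter fun p : V × V => H.Adj p.1 p.2).filter
            fun p => p.1 = v) ⊆ (K.filter (H.Adj v)).image (fun u => (v, u)) := by
          intro p hp
          simp only [mem_filter, mem_product] at hp
          obtain ⟨⟨⟨_, hp2⟩, hadj⟩, hfst⟩ := hp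
          subst hfst
          simp only [mem_image, mem_filter]
          exact ⟨p.2, ⟨hp2, hadj⟩, rfl⟩
        calc _ ≤ #((K.filter (H.Adj v)).image (fun u => (v, u))) := card_le_card hsub
        _ ≤ #(K.filter (H.Adj v)) := card_image_le
        _ ≤ k := nbrs_in_clique_le hf hK hKs hv.1 hv.2
      _ = #(s \ K) * k := by rw [sum_const, smul_eq_mul]

/-- Turán-type bound: if `G` has no `k+1`-clique within `s`, the number of ordered
adjacent pairs inside `s` is at most `(1 - 1/k) * #s ^ 2`. -/
theorem turan_on (H : SimpleGraph V) [DecidableRel H.Adj] :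
    ∀ (k m : ℕ) (s : Finset V), #s ≤ m → H.CliqueFreeOn (s : Set V) (k+1) →
      k * apairs H s s ≤ (k-1) * (#s)^2 := by
  intro k
  induction k with
  | zero => intro m s _ _; simp
  | succ k ihk =>
    intro m
    induction m with
    | zero =>
      intro s hs _
      interval_cases h : #s
      · have : s = ∅ := card_eq_zero.mp h
        subst this
        simp [apairs]
    | succ m ihm =>
      intro s hs hcf
      by_cases hk : H.CliqueFreeOn (s : Set V) (k+1)
      · -- also (k+1)-clique-free on s; use ihk
        have h1 := ihk (m+1) s hs hk
        have h2 : apairs H s s ≤ (#s)^2 := by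
          calc apairs H s s ≤ #s * #s := apairs_le ..
          _ = (#s)^2 := (sq #s).symm
        match k, h1, hk with
        | 0, h1, hk =>
          -- CliqueFreeOn s 1 : s has no vertices
          have : s = ∅ := by
            by_contra hne
            obtain ⟨v, hv⟩ := nonempty_iff_ne_empty.mpr hne
            exact hk (t := {v}) (by simpa) (by simp [isNClique_iff, isClique_iff, Set.Pairwise])
          subst this
          simp [apairs]
        | (j+1), h1, hk =>
          have h1' : (j+1) * apairs H s s ≤ j * (#s)^2 := by simpa using h1
          have : (j+1+1) * apairs H s s ≤ (j+1) * (#s)^2 := by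
            calc (j+1+1) * apairs H s s = (j+1) * apairs H s s + apairs H s s := by ring
            _ ≤ j*(#s)^2 + (#s)^2 := add_le_add h1' h2
            _ = (j+1)*(#s)^2 := by ring
          simpa using this
      · -- there is a (k+1)-clique K ⊆ s
        rw [CliqueFreeOn] at hk
        push_neg at hk
        obtain ⟨K, hKs, hK⟩ := hk
        have hKs' : K ⊆ s := by exact_mod_cast hKs
        set s' := s \ K with hs'
        have hunion : s = K ∪ s' := by
          rw [hs', union_sdiff_of_subset hKs']
        have hKcard : #K = k + 1 := hK.card_eq
        have hcard : #s = #s' + (k+1) := by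
          rw [hs', card_sdiff_of_subset hKs', hKcard]
          have : k + 1 ≤ #s := hKcard ▸ card_le_card hKs'
          omega
        have hs'm : #s' ≤ m := by omega
        have hcf' : H.CliqueFreeOn (s' : Set V) (k+2) := by
          have hsub : (s' : Set V) ⊆ (s : Set V) := Finset.coe_subset.mpr sdiff_subset
          exact CliqueFreeOn.subset H hsub hcf
        have ih := ihm s' hs'm hcf'
        have hsplit := by
          calc apairs H s s = apairs H (K ∪ s') (K ∪ s') := by rw [← hunion]
          _ ≤ apairs H K K + apairs H K s' + apairs H s' K + apairs H s' s' :=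
            apairs_split ..
        have hKK : apairs H K K ≤ (k+1) * (k+1) - (k+1) := by
          have := apairs_self_le_offDiag H K
          rwa [hKcard] at this
        have hcross : apairs H s' K ≤ #s' * k := cross_pairs_le hcf hK hKs'
        have hcross2 : apairs H K s' ≤ #s' * k := by
          rw [apairs_comm]; exact hcross
        -- arithmetic
        set M := #s'
        set P := apairs H s' s'
        have harith : (k+1) * apairs H s s ≤ (k+1-1) * (#s)^2 := by
          have e1 : (k+1) * ((k+1)*(k+1) - (k+1)) = k * (k+1)^2 := by
            have : (k+1)*(k+1) - (k+1) = k * (k+1) := by ring_nf; omega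
            rw [this]; ring
          have hgoal : (k+1) * apairs H s s ≤ k * (M + (k+1))^2 := by
            have h5 : (k+1) * apairs H s s ≤
                (k+1) * (((k+1)*(k+1) - (k+1)) + M * k + M * k + P) := by
              apply Nat.mul_le_mul_left
              omega
            have h6 : (k+1) * (((k+1)*(k+1) - (k+1)) + M * k + M * k + P)
                = k * (k+1)^2 + 2 * (k+1) * M * k + (k+1) * P := by
              rw [mul_add, mul_add, mul_add, e1]; ring
            have h7 : (k+1) * P ≤ k * M^2 := by simpa using ih
            have h8 : k * (M + (k+1))^2
                = k * (k+1)^2 + 2 * (k+1) * M * k + k * M^2 := by ring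
            omega
          rw [hcard]
          simpa using hgoal
        exact harith


lemma pair_card_two {x y : V} (h : x ≠ y) : #({(x,y), (y,x)} : Finset (V × V)) = 2 := by
  rw [card_insert_of_notMem (by simp [Prod.ext_iff]; intro hxy; exact absurd hxy h), card_singleton]

lemma two_mul_card_le_pairs (E : Finset (Sym2 V)) (hE : ∀ e ∈ E, ¬ e.IsDiag) :
    2 * #E ≤ #((univ ×ˢ univ : Finset (V × V)).filter fun p => s(p.1, p.2) ∈ E) := by
  rw [card_eq_sum_card_fiberwise (f := fun p : V × V => s(p.1, p.2)) (t := E)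
    (s := (univ ×ˢ univ : Finset (V × V)).filter fun p => s(p.1, p.2) ∈ E)
    (fun p hp => (mem_filter.mp hp).2)]
  have : ∀ e ∈ E, 2 ≤ #((((univ ×ˢ univ : Finset (V × V)).filter
      fun p => s(p.1, p.2) ∈ E)).filter fun p => s(p.1, p.2) = e) := by
    intro e he
    induction e with
    | _ x y =>
      have hxy : x ≠ y := by
        intro h; exact hE _ he (by simp [h])
      calc 2 = #({(x,y), (y,x)} : Finset (V × V)) := (pair_card_two hxy).symm
      _ ≤ _ := by
        apply card_le_card
        intro p hp
        simp only [mem_insert, mem_singleton] at hp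
        have hswap : s(y, x) = s(x, y) := Sym2.eq_swap
        rcases hp with rfl | rfl
        · exact mem_filter.mpr ⟨mem_filter.mpr ⟨mem_product.mpr ⟨mem_univ _, mem_univ _⟩, he⟩, rfl⟩
        · exact mem_filter.mpr ⟨mem_filter.mpr ⟨mem_product.mpr ⟨mem_univ _, mem_univ _⟩,
            by rw [show s((y,x).1, (y,x).2) = s(x,y) from hswap]; exact he⟩,
            by rw [show s((y,x).1, (y,x).2) = s(x,y) from hswap]⟩

  calc 2 * #E = ∑ _e ∈ E, 2 := by rw [sum_const, smul_eq_mul, mul_comm]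
  _ ≤ _ := sum_le_sum this


lemma bipNum_bddAbove (G : SimpleGraph V) :
    BddAbove {k | ∃ B : Finset V, (G.induce (B : Set V)).Colorable 2 ∧ B.card = k} := by
  refine ⟨Fintype.card V, ?_⟩
  rintro k ⟨B, _, rfl⟩
  exact B.card_le_univ

lemma le_bipNum (G : SimpleGraph V) (B : Finset V)
    (h : (G.induce (B : Set V)).Colorable 2) : #B ≤ bipNum G :=
  le_csSup (bipNum_bddAbove G) ⟨B, h, rfl⟩

lemma alphaOne_bound (G : SimpleGraph V) (A : Finset (Sym2 V)) (hA : IsTriangleIndep G A) :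
    4 * #A ≤ Fintype.card V * bipNum G := by
  classical
  obtain ⟨hsub, htri⟩ := hA
  have hadjA : ∀ {a b : V}, s(a,b) ∈ A → G.Adj a b := fun h => (hsub (mem_coe.mpr h))
  by_cases hA0 : A = ∅
  · simp [hA0]
  set n := Fintype.card V with hn
  set d : V → ℕ := fun v => #(univ.filter (fun x => s(v, x) ∈ A)) with hd
  -- two edges of A at a common vertex have non-adjacent endpoints
  have hindep : ∀ u x y : V, s(u,x) ∈ A → s(u,y) ∈ A → x ≠ y → ¬ G.Adj x y := by
    intro u x y hx hy hxy hadj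
    have hxu : G.Adj u x := hadjA hx
    have hyu : G.Adj u y := hadjA hy
    have h1 := htri x u y hxu.symm hyu hadj
    have hne : s(x,u) ≠ s(u,y) := by
      intro heq
      rw [Sym2.eq_iff] at heq
      rcases heq with ⟨h1, _⟩ | ⟨h1, _⟩
      · exact hxu.ne h1.symm
      · exact hxy h1
    have hsub2 : ({s(x,u), s(u,y)} : Finset (Sym2 V)) ⊆
        ({s(x,u), s(u,y), s(x,y)} : Finset (Sym2 V)) ∩ A := by
      intro e he
      rw [mem_insert, mem_singleton] at he
      rw [mem_inter]
      rcases he with rfl | rfl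
      · exact ⟨by simp, by rwa [Sym2.eq_swap]⟩
      · exact ⟨by simp, hy⟩
    have h2 : 2 ≤ #(({s(x,u), s(u,y), s(x,y)} : Finset (Sym2 V)) ∩ A) := by
      calc 2 = #({s(x,u), s(u,y)} : Finset (Sym2 V)) := by
            rw [card_insert_of_notMem (by simpa using hne), card_singleton]
      _ ≤ _ := card_le_card hsub2
    omega
  -- neighborhoods along A-edges are disjoint
  have hdisj : ∀ u v x : V, s(u,v) ∈ A → s(u,x) ∈ A → s(v,x) ∈ A → False := by
    intro u v x huv hux hvx
    have hadj_uv : G.Adj u v := hadjA huv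
    have hadj_ux : G.Adj u x := hadjA hux
    have hadj_vx : G.Adj v x := hadjA hvx
    have h1 := htri u x v hadj_ux hadj_vx.symm hadj_uv
    have hne : s(u,x) ≠ s(x,v) := by
      intro heq
      rw [Sym2.eq_iff] at heq
      rcases heq with ⟨h1, _⟩ | ⟨h1, _⟩
      · exact hadj_ux.ne h1
      · exact hadj_uv.ne h1
    have hsub2 : ({s(u,x), s(x,v)} : Finset (Sym2 V)) ⊆
        ({s(u,x), s(x,v), s(u,v)} : Finset (Sym2 V)) ∩ A := by
      intro e he
      rw [mem_insert, mem_singleton] at he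
      rw [mem_inter]
      rcases he with rfl | rfl
      · exact ⟨by simp, hux⟩
      · exact ⟨by simp, by rwa [Sym2.eq_swap]⟩
    have h2 : 2 ≤ #(({s(u,x), s(x,v), s(u,v)} : Finset (Sym2 V)) ∩ A) := by
      calc 2 = #({s(u,x), s(x,v)} : Finset (Sym2 V)) := by
            rw [card_insert_of_notMem (by simpa using hne), card_singleton]
      _ ≤ _ := card_le_card hsub2
    omega
  -- each A-edge gives an induced bipartite set of size d u + d v
  have hedge : ∀ u v : V, s(u,v) ∈ A → d u + d v ≤ bipNum G := by
    intro u v huv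
    set Nu := univ.filter (fun x => s(u, x) ∈ A) with hNu
    set Nv := univ.filter (fun x => s(v, x) ∈ A) with hNv
    have hdisjN : Disjoint Nu Nv := by
      rw [Finset.disjoint_left]
      intro x hxu hxv
      exact hdisj u v x huv (mem_filter.mp hxu).2 (mem_filter.mp hxv).2
    have hcardUnion : #(Nu ∪ Nv) = d u + d v := by
      rw [card_union_of_disjoint hdisjN]
    have hcol : (G.induce ((Nu ∪ Nv : Finset V) : Set V)).Colorable 2 := by
      refine ⟨Coloring.mk (fun z => if (z : V) ∈ Nu then 0 else 1) ?_⟩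
      rintro ⟨x, hx⟩ ⟨y, hy⟩ hadj hcoleq
      rw [mem_coe, mem_union] at hx hy
      have hadj' : G.Adj x y := hadj
      by_cases h1 : x ∈ Nu <;> by_cases h2 : y ∈ Nu <;> simp only [h1, h2,
        if_true, if_false] at hcoleq
      · exact hindep u x y (mem_filter.mp h1).2 (mem_filter.mp h2).2 hadj'.ne hadj'
      · exact absurd hcoleq (by decide)
      · exact absurd hcoleq (by decide)
      · have hx' : x ∈ Nv := hx.resolve_left h1
        have hy' : y ∈ Nv := hy.resolve_left h2
        exact hindep v x y (mem_filter.mp hx').2 (mem_filter.mp hy').2 hadj'.ne hadj'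
    calc d u + d v = #(Nu ∪ Nv) := hcardUnion.symm
    _ ≤ bipNum G := le_bipNum G _ hcol
  -- counting: sum of degrees is the number of ordered pairs in A
  set P := (univ ×ˢ univ : Finset (V × V)).filter (fun p => s(p.1, p.2) ∈ A) with hP
  have hfiber : ∀ v : V, #(P.filter (fun p => p.1 = v)) = d v := by
    intro v
    have himg : P.filter (fun p => p.1 = v)
        = (univ.filter (fun x => s(v,x) ∈ A)).image (fun x => (v,x)) := by
      ext ⟨a, b⟩
      simp only [hP, mem_filter, mem_product, mem_univ, true_and, mem_image, Prod.mk.injEq]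
      constructor
      · rintro ⟨hmem, rfl⟩
        exact ⟨b, hmem, rfl, rfl⟩
      · rintro ⟨x, hx, rfl, rfl⟩
        exact ⟨hx, rfl⟩
    rw [himg, card_image_of_injective _ (fun x y h => (Prod.mk.injEq _ _ _ _).mp h |>.2)]
  have hsum1 : ∑ v, d v = #P := by
    rw [card_eq_sum_card_fiberwise (f := Prod.fst) (t := univ) (fun p _ => mem_univ _)]
    exact sum_congr rfl fun v _ => (hfiber v).symm
  have hnondiag : ∀ e ∈ A, ¬ e.IsDiag := by
    intro e he
    exact G.not_isDiag_of_mem_edgeSet (hsub (mem_coe.mpr he))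
  have h2A : 2 * #A ≤ #P := two_mul_card_le_pairs A hnondiag
  -- weight identity
  set w : Sym2 V → ℕ := Sym2.lift ⟨fun x y => d x + d y,
    fun x y => by simp only []; omega⟩ with hw
  have hsum2 : ∑ v, d v * d v = ∑ e ∈ A, w e := by
    have step1 : ∑ p ∈ P, d p.1 = ∑ v, d v * d v := by
      rw [← sum_fiberwise_of_maps_to (g := Prod.fst) (t := univ)
        (fun p _ => mem_univ _) (fun p : V × V => d p.1)]
      apply sum_congr rfl
      intro v _
      calc ∑ p ∈ P.filter (fun p => p.1 = v), d p.1
          = ∑ p ∈ P.filter (fun p => p.1 = v), d v := by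
            apply sum_congr rfl
            intro p hp
            rw [(mem_filter.mp hp).2]
      _ = #(P.filter (fun p => p.1 = v)) * d v := by rw [sum_const, smul_eq_mul]
      _ = d v * d v := by rw [hfiber]
    have step2 : ∑ p ∈ P, d p.1 = ∑ e ∈ A, ∑ p ∈ P.filter (fun p => s(p.1, p.2) = e), d p.1 :=
      (sum_fiberwise_of_maps_to (g := fun p : V × V => s(p.1, p.2)) (t := A)
        (fun p hp => (mem_filter.mp hp).2) (fun p : V × V => d p.1)).symm
    have step3 : ∀ e ∈ A, ∑ p ∈ P.filter (fun p => s(p.1, p.2) = e), d p.1 = w e := by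
      intro e he
      induction e with
      | _ x y =>
        have hxy : x ≠ y := fun h => hnondiag _ he (by simp [h])
        have hfeq : P.filter (fun p => s(p.1, p.2) = s(x,y)) = {(x,y), (y,x)} := by
          ext ⟨a, b⟩
          simp only [hP, mem_filter, mem_product, mem_univ, true_and, mem_insert,
            mem_singleton, Prod.mk.injEq]
          constructor
          · rintro ⟨_, heq⟩
            rw [Sym2.eq_iff] at heq
            tauto
          · rintro (⟨rfl, rfl⟩ | ⟨rfl, rfl⟩)
            · exact ⟨he, rfl⟩
            · exact ⟨by rwa [Sym2.eq_swap], Sym2.eq_swap⟩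
        rw [hfeq, sum_insert (by simp [Prod.ext_iff]; intro h; exact absurd h hxy),
          sum_singleton]
        simp only [hw, Sym2.lift_mk]
    rw [← step1, step2]
    exact sum_congr rfl step3
  -- maximal edge
  obtain ⟨e0, he0, hmax⟩ := exists_max_image A w (nonempty_of_ne_empty hA0)
  have hsumle : ∑ e ∈ A, w e ≤ #A * w e0 := by
    calc ∑ e ∈ A, w e ≤ ∑ _e ∈ A, w e0 := sum_le_sum hmax
    _ = #A * w e0 := by rw [sum_const, smul_eq_mul]
  have he0b : w e0 ≤ bipNum G := by
    induction e0 with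
    | _ u v =>
      have : w s(u,v) = d u + d v := by simp only [hw, Sym2.lift_mk]
      rw [this]
      exact hedge u v he0
  -- Cauchy–Schwarz
  have hcs : (∑ v, d v) * (∑ v, d v) ≤ n * ∑ v, d v * d v := by
    have h := sq_sum_le_card_mul_sum_sq (s := (univ : Finset V))
      (f := fun v => (d v : ℤ))
    rw [Finset.card_univ] at h
    have hsq : ∑ v, ((d v : ℤ))^2 = ∑ v, ((d v : ℤ) * (d v : ℤ)) := by
      apply sum_congr rfl; intro v _; ring
    rw [hsq] at h
    zify
    push_cast
    calc (∑ v, (d v:ℤ)) * (∑ v, (d v:ℤ)) = (∑ v, (d v:ℤ))^2 := by ring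
    _ ≤ (Fintype.card V : ℤ) * ∑ v, ((d v : ℤ) * (d v : ℤ)) := h
  -- combine
  have hchain : (2 * #A) * (2 * #A) ≤ n * bipNum G * #A := by
    calc (2 * #A) * (2 * #A) ≤ (∑ v, d v) * (∑ v, d v) :=
      Nat.mul_le_mul (hsum1 ▸ h2A) (hsum1 ▸ h2A)
    _ ≤ n * ∑ v, d v * d v := hcs
    _ = n * ∑ e ∈ A, w e := by rw [hsum2]
    _ ≤ n * (#A * w e0) := Nat.mul_le_mul_left _ hsumle
    _ ≤ n * (#A * bipNum G) := Nat.mul_le_mul_left _ (Nat.mul_le_mul_left _ he0b)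
    _ = n * bipNum G * #A := by ring
  have hApos : 0 < #A := card_pos.mpr (nonempty_of_ne_empty hA0)
  have : 4 * #A * #A ≤ n * bipNum G * #A := by
    calc 4 * #A * #A = (2 * #A) * (2 * #A) := by ring
    _ ≤ _ := hchain
  exact Nat.le_of_mul_le_mul_right this hApos


lemma tauB_le_bound (G : SimpleGraph V) [DecidableRel G.Adj] (B : Finset V)
    (hB : (G.induce (B : Set V)).Colorable 2) :
    4 * tauB G ≤ 2 * apairs G B Bᶜ + apairs G Bᶜ Bᶜ := by
  obtain ⟨σ, hσ⟩ := greedy G B hB Bᶜ disjoint_compl_right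
  rw [union_compl] at hσ
  set D := G.edgeFinset.filter
    (fun e => Sym2.lift ⟨fun x y => σ x == σ y, by intro x y; simp only []; rw [Bool.beq_comm]⟩ e = true)
    with hD
  have hDedge : ∀ e ∈ D, e ∈ G.edgeSet := by
    intro e he
    rw [hD, mem_filter] at he
    exact mem_edgeFinset.mp he.1
  have hDsub : (D : Set (Sym2 V)) ⊆ G.edgeSet := fun e he => hDedge e (mem_coe.mp he)
  have hcol : (G.deleteEdges (D : Set (Sym2 V))).Colorable 2 := by
    refine ⟨Coloring.mk (fun v => if σ v then 0 else 1) ?_⟩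
    intro x y hadj
    rw [deleteEdges_adj] at hadj
    intro hcoleq
    have hσeq : σ x = σ y := by
      by_contra hne
      cases hx : σ x <;> cases hy : σ y <;> simp [hx, hy] at hcoleq hne ⊢
    apply hadj.2
    rw [mem_coe, hD, mem_filter]
    exact ⟨mem_edgeFinset.mpr hadj.1, by rw [Sym2.lift_mk]; simp [hσeq]⟩
  have htau : tauB G ≤ #D := Nat.sInf_le ⟨D, hDsub, hcol, rfl⟩
  have hcount : 2 * #D ≤ apairs (monoGraph G σ) univ univ := by
    calc 2 * #D ≤ #((univ ×ˢ univ : Finset (V × V)).filter fun p => s(p.1, p.2) ∈ D) :=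
      two_mul_card_le_pairs D (fun e he => G.not_isDiag_of_mem_edgeSet (hDedge e he))
    _ ≤ apairs (monoGraph G σ) univ univ := by
      apply card_le_card
      intro p hp
      rw [mem_filter] at hp
      have hmem := hp.2
      rw [hD, mem_filter] at hmem
      have hadj : G.Adj p.1 p.2 := mem_edgeFinset.mp hmem.1
      have hmono : σ p.1 = σ p.2 := by
        have := hmem.2
        rw [Sym2.lift_mk] at this
        exact eq_of_beq this
      exact mem_filter.mpr ⟨hp.1, ⟨hadj, hmono⟩⟩
  omega


/-- For every `K₅`-free graph `G` on `n` vertices, `α₁(G) + τ_B(G) ≤ 3 n² / 10`. -/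
theorem alphaOne_add_tauB_le_of_cliqueFree_five (G : SimpleGraph V) (h5 : G.CliqueFree 5) :
    (alphaOne G + tauB G : ℝ) ≤ 3 * (Fintype.card V : ℝ) ^ 2 / 10 := by
  classical
  set n := Fintype.card V with hn
  -- a maximum triangle-independent set
  have hAne : {k | ∃ A : Finset (Sym2 V), IsTriangleIndep G A ∧ A.card = k}.Nonempty := by
    refine ⟨0, ∅, ⟨by simp, ?_⟩, rfl⟩
    intro a b c _ _ _
    simp
  have hAbdd : BddAbove {k | ∃ A : Finset (Sym2 V), IsTriangleIndep G A ∧ A.card = k} := by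
    refine ⟨Fintype.card (Sym2 V), ?_⟩
    rintro k ⟨A, _, rfl⟩
    exact A.card_le_univ
  obtain ⟨A, hA, hAcard⟩ : ∃ A : Finset (Sym2 V), IsTriangleIndep G A ∧ A.card = alphaOne G :=
    Nat.sSup_mem hAne hAbdd
  -- a maximum induced-bipartite set
  have hBne : {k | ∃ B : Finset V, (G.induce (B : Set V)).Colorable 2 ∧ B.card = k}.Nonempty := by
    refine ⟨0, ∅, ⟨Coloring.mk (fun x => False.elim (by simpa using x.2))
      (fun {a b} _ => False.elim (by simpa using a.2))⟩, rfl⟩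
  obtain ⟨B, hBcol, hBcard⟩ : ∃ B : Finset V,
      (G.induce (B : Set V)).Colorable 2 ∧ B.card = bipNum G :=
    Nat.sSup_mem hBne (bipNum_bddAbove G)
  -- the main numeric bounds
  have h1 : 4 * alphaOne G ≤ n * bipNum G := hAcard ▸ alphaOne_bound G A hA
  have h2 : 4 * tauB G ≤ 2 * apairs G B Bᶜ + apairs G Bᶜ Bᶜ := tauB_le_bound G B hBcol
  have h3 : apairs G B Bᶜ ≤ #B * #Bᶜ := apairs_le G B Bᶜ
  have h4 : 4 * apairs G Bᶜ Bᶜ ≤ 3 * (#Bᶜ)^2 := by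
    have := turan_on G 4 (#Bᶜ) Bᶜ le_rfl (h5.cliqueFreeOn)
    simpa using this
  have hble : #B ≤ n := by rw [hn]; exact B.card_le_univ
  have hcompl : #Bᶜ = n - #B := by rw [Finset.card_compl, hn]
  -- move to the reals
  set b := #B with hb
  have hbR : ((#Bᶜ : ℕ) : ℝ) = (n : ℝ) - (b : ℝ) := by
    rw [hcompl, Nat.cast_sub hble]
  have hα : (alphaOne G : ℝ) ≤ (n : ℝ) * (b : ℝ) / 4 := by
    have : ((4 * alphaOne G : ℕ) : ℝ) ≤ ((n * bipNum G : ℕ) : ℝ) := Nat.cast_le.mpr h1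
    push_cast at this
    rw [← hBcard] at this
    push_cast at this
    linarith
  have hcrossR : ((apairs G B Bᶜ : ℕ) : ℝ) ≤ (b : ℝ) * ((n : ℝ) - (b : ℝ)) := by
    have : ((apairs G B Bᶜ : ℕ) : ℝ) ≤ ((#B * #Bᶜ : ℕ) : ℝ) := Nat.cast_le.mpr h3
    push_cast at this
    rw [show ((#Bᶜ : ℕ) : ℝ) = (n : ℝ) - (b : ℝ) from hbR] at this
    exact this
  have hinR : 4 * ((apairs G Bᶜ Bᶜ : ℕ) : ℝ) ≤ 3 * ((n : ℝ) - (b : ℝ))^2 := by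
    have : ((4 * apairs G Bᶜ Bᶜ : ℕ) : ℝ) ≤ ((3 * (#Bᶜ)^2 : ℕ) : ℝ) := Nat.cast_le.mpr h4
    push_cast at this
    rw [show ((#Bᶜ : ℕ) : ℝ) = (n : ℝ) - (b : ℝ) from hbR] at this
    linarith
  have hτ : 4 * (tauB G : ℝ) ≤ 2 * ((apairs G B Bᶜ : ℕ) : ℝ) + ((apairs G Bᶜ Bᶜ : ℕ) : ℝ) := by
    have : ((4 * tauB G : ℕ) : ℝ) ≤ ((2 * apairs G B Bᶜ + apairs G Bᶜ Bᶜ : ℕ) : ℝ) :=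
      Nat.cast_le.mpr h2
    push_cast at this
    linarith
  have hbn : (b : ℝ) ≤ (n : ℝ) := Nat.cast_le.mpr hble
  have hb0 : (0 : ℝ) ≤ (b : ℝ) := Nat.cast_nonneg _
  have c1 : (0:ℝ) ≤ ((tauB G : ℕ) : ℝ) := Nat.cast_nonneg _
  have c2 : (0:ℝ) ≤ ((alphaOne G : ℕ) : ℝ) := Nat.cast_nonneg _
  have c3 : (0:ℝ) ≤ ((apairs G Bᶜ Bᶜ : ℕ) : ℝ) := Nat.cast_nonneg _
  have c4 : (0:ℝ) ≤ ((apairs G B Bᶜ : ℕ) : ℝ) := Nat.cast_nonneg _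
  nlinarith [sq_nonneg (2 * (n : ℝ) - 5 * ((n : ℝ) - (b : ℝ))), hα, hτ, hcrossR, hinR]
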